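/- Let ω ∈ 𝒲, 0 < p < ∞, and suppose the pointwise estimate (Eq-gamma) |h(z)|^p ω(z)^β (1+φ'(z))^{-γ} ≲ τ(z)^{-2} ∫_{D_δ(z)} |h(ξ)|^p ω(ξ)^β (1+φ'(ξ))^{-γ} dA(ξ) holds for holomorphic h. If φ is an analytic self-map of 𝔻, g ∈ H(𝔻), and M(z) := |g(z)|·(1+φ'(φ(z)))/(1+φ'(z))·ω(z)^{1/2}/ω(φ(z))^{1/2}·τ(φ(z))^{-2/p} is bounded on 𝔻, then for all f holomorphic with ∫_𝔻 |f'|^p ω^{p/2}(1+φ')^{-p} dA < ∞, one has sup_z |f'(φ(z))| |g(z)| ω(z)^{1/2}/(1+φ'(z)) ≲ sup_z M(z) · (∫_𝔻 |f'(ξ)|^p ω(ξ)^{p/2}(1+φ'(ξ))^{-p} dA(ξ))^{1/p}. -/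

import Mathlib

open Complex Metric MeasureTheory

/-- Sufficiency direction of Theorem 1(B): if
`M(z) = |g(z)| (1+φ'(σ(z)))/(1+φ'(z)) · ω(z)^{1/2}/ω(σ(z))^{1/2} · τ(σ(z))^{-2/p}` is
bounded on `𝔻`, then for `f` with `∫_𝔻 |f'|^p ω^{p/2} (1+φ')^{-p} dA < ∞`,
`sup_z |f'(σ(z))||g(z)| ω(z)^{1/2}/(1+φ'(z)) ≲ (sup M) (∫_𝔻 |f'|^p ω^{p/2}(1+φ')^{-p})^{1/p}`. -/
theorem stmt19 (w τ : ℂ → ℝ) (v : ℝ → ℝ) (c₁ c₂ : ℝ) (hc₁ : 0 < c₁) (hc₂ : 0 < c₂)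
    (hw : ∀ z : ℂ, w z = Real.exp (-2 * v (‖z‖)))
    (hτpos : ∀ z ∈ ball (0:ℂ) 1, 0 < τ z)
    (h1 : ∀ z ∈ ball (0:ℂ) 1, τ z ≤ c₁ * (1 - ‖z‖))
    (h2 : ∀ z ∈ ball (0:ℂ) 1, ∀ ζ ∈ ball (0:ℂ) 1,
      |τ z - τ ζ| ≤ c₂ * ‖z - ζ‖)
    (hv : ∀ r : ℝ, 0 ≤ r → r < 1 → 0 ≤ deriv v r)
    (p : ℝ) (hp : 0 < p)
    (δ : ℝ) (hδ0 : 0 < δ) (hδ : δ < min 1 (min c₁⁻¹ c₂⁻¹) / 4)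
    (σ : ℂ → ℂ) (hσhol : DifferentiableOn ℂ σ (ball (0:ℂ) 1))
    (hσmap : ∀ z ∈ ball (0:ℂ) 1, σ z ∈ ball (0:ℂ) 1)
    (hEq : ∀ β γ : ℝ, ∃ C : ℝ, 0 < C ∧
      ∀ h : ℂ → ℂ, DifferentiableOn ℂ h (ball (0:ℂ) 1) → ∀ z ∈ ball (0:ℂ) 1,
        ‖h z‖ ^ p * w z ^ β / (1 + deriv v (‖z‖)) ^ γ ≤
          C / τ z ^ 2 * ∫ ξ in ball z (δ * τ z),
            ‖h ξ‖ ^ p * w ξ ^ β / (1 + deriv v (‖ξ‖)) ^ γ) :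
    ∃ C : ℝ, 0 < C ∧ ∀ (g : ℂ → ℂ), DifferentiableOn ℂ g (ball (0:ℂ) 1) →
      ∀ B : ℝ, 0 ≤ B →
      (∀ z ∈ ball (0:ℂ) 1,
        ‖g z‖ *
          ((1 + deriv v (‖σ z‖)) / (1 + deriv v (‖z‖))) *
          (w z ^ ((1:ℝ)/2) / w (σ z) ^ ((1:ℝ)/2)) * τ (σ z) ^ (-(2:ℝ)/p) ≤ B) →
      ∀ f : ℂ → ℂ, DifferentiableOn ℂ f (ball (0:ℂ) 1) →
        IntegrableOn (fun ξ => ‖deriv f ξ‖ ^ p * w ξ ^ (p/2) /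
          (1 + deriv v (‖ξ‖)) ^ p) (ball (0:ℂ) 1) →
        ∀ z ∈ ball (0:ℂ) 1,
          ‖deriv f (σ z)‖ * ‖g z‖ * w z ^ ((1:ℝ)/2) /
              (1 + deriv v (‖z‖)) ≤
            C * B * (∫ ξ in ball (0:ℂ) 1, ‖deriv f ξ‖ ^ p * w ξ ^ (p/2) /
              (1 + deriv v (‖ξ‖)) ^ p) ^ (1/p) := by
  obtain ⟨C, hC, hCbound⟩ := hEq (p/2) p
  refine ⟨C ^ (1/p), Real.rpow_pos_of_pos hC _, ?_⟩
  intro g hg B hB hM f hf hfint z hz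
  have hp' : p ≠ 0 := ne_of_gt hp
  set u := σ z with hu_def
  have hu : u ∈ ball (0:ℂ) 1 := hσmap z hz
  have hau : ‖u‖ < 1 := by simpa [Complex.dist_eq] using hu
  have haz : ‖z‖ < 1 := by simpa [Complex.dist_eq] using hz
  have htu : 0 < τ u := hτpos u hu
  have hwu : 0 < w u := by rw [hw]; exact Real.exp_pos _
  have hwz : 0 < w z := by rw [hw]; exact Real.exp_pos _
  have hdu : 0 < 1 + deriv v (‖u‖) := by
    have := hv (‖u‖) (norm_nonneg u) hau; linarith
  have hdz : 0 < 1 + deriv v (‖z‖) := by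
    have := hv (‖z‖) (norm_nonneg z) haz; linarith
  have hdf : DifferentiableOn ℂ (deriv f) (ball (0:ℂ) 1) :=
    ((hf.analyticOnNhd isOpen_ball).deriv).differentiableOn
  set F : ℂ → ℝ := fun ξ => ‖deriv f ξ‖ ^ p * w ξ ^ (p/2) /
      (1 + deriv v (‖ξ‖)) ^ p with hF
  have hFnonneg : ∀ ξ ∈ ball (0:ℂ) 1, 0 ≤ F ξ := by
    intro ξ hξ
    have hξ1 : ‖ξ‖ < 1 := by simpa [Complex.dist_eq] using hξ
    have hdξ : 0 < 1 + deriv v (‖ξ‖) := by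
      have := hv (‖ξ‖) (norm_nonneg ξ) hξ1; linarith
    exact div_nonneg (mul_nonneg (Real.rpow_nonneg (norm_nonneg _) _)
      (Real.rpow_nonneg (le_of_lt (by rw [hw]; exact Real.exp_pos _)) _))
      (Real.rpow_nonneg hdξ.le _)
  -- inclusion of the disk
  have hsub : ball u (δ * τ u) ⊆ ball (0:ℂ) 1 := by
    intro x hx
    have hδc : δ * c₁ < 1 := by
      have h1' : δ < c₁⁻¹ := lt_of_lt_of_le hδ (by
        have : min 1 (min c₁⁻¹ c₂⁻¹) ≤ c₁⁻¹ := le_trans (min_le_right _ _) (min_le_left _ _)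
        nlinarith [this])
      calc δ * c₁ < c₁⁻¹ * c₁ := by nlinarith
        _ = 1 := inv_mul_cancel₀ (ne_of_gt hc₁)
    have h1u : 0 < 1 - ‖u‖ := by linarith
    have hstep : δ * τ u < 1 - ‖u‖ := by
      have := h1 u hu
      calc δ * τ u ≤ δ * (c₁ * (1 - ‖u‖)) := by nlinarith
        _ = δ * c₁ * (1 - ‖u‖) := by ring
        _ < 1 * (1 - ‖u‖) := by nlinarith
        _ = 1 - ‖u‖ := one_mul _
    have hd : dist x (0:ℂ) ≤ dist x u + dist u 0 := dist_triangle _ _ _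
    have : dist x u < δ * τ u := mem_ball.mp hx
    have hu0 : dist u (0:ℂ) = ‖u‖ := by simp [Complex.dist_eq]
    rw [mem_ball]
    rw [hu0] at hd
    linarith
  have hmono : (∫ ξ in ball u (δ * τ u), F ξ) ≤ ∫ ξ in ball (0:ℂ) 1, F ξ := by
    refine setIntegral_mono_set hfint ?_ (HasSubset.Subset.eventuallyLE hsub)
    exact (ae_restrict_iff' measurableSet_ball).2 (Filter.Eventually.of_forall hFnonneg)
  set I := ∫ ξ in ball (0:ℂ) 1, F ξ with hI_def
  have hI : 0 ≤ I := setIntegral_nonneg measurableSet_ball hFnonneg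
  have hkey := hCbound (deriv f) hdf u hu
  set a := ‖deriv f u‖ with ha_def
  have ha : 0 ≤ a := norm_nonneg _
  have hX : a ^ p * w u ^ (p/2) / (1 + deriv v (‖u‖)) ^ p * τ u ^ 2 ≤ C * I := by
    have h2' : a ^ p * w u ^ (p/2) / (1 + deriv v (‖u‖)) ^ p ≤ C / τ u ^ 2 * I := by
      refine le_trans hkey ?_
      exact mul_le_mul_of_nonneg_left hmono (by positivity)
    have ht2 : (0:ℝ) < τ u ^ 2 := by positivity
    calc a ^ p * w u ^ (p/2) / (1 + deriv v (‖u‖)) ^ p * τ u ^ 2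
        ≤ C / τ u ^ 2 * I * τ u ^ 2 := mul_le_mul_of_nonneg_right h2' ht2.le
      _ = C * I := by field_simp
  set A := a * w u ^ ((1:ℝ)/2) * τ u ^ ((2:ℝ)/p) / (1 + deriv v (‖u‖)) with hA_def
  have hAnonneg : 0 ≤ A := by positivity
  have hApow : A ^ p = a ^ p * w u ^ (p/2) / (1 + deriv v (‖u‖)) ^ p * τ u ^ 2 := by
    rw [hA_def, Real.div_rpow (by positivity) hdu.le,
      Real.mul_rpow (by positivity) (by positivity),
      Real.mul_rpow ha (by positivity),
      ← Real.rpow_natCast (τ u) 2, ← Real.rpow_mul htu.le,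
      ← Real.rpow_mul hwu.le]
    rw [div_mul_cancel₀ (2:ℝ) hp']
    ring_nf
  have hAle : A ≤ C ^ (1/p) * I ^ (1/p) := by
    have h1 : A = (A ^ p) ^ (1/p) := by
      rw [← Real.rpow_mul hAnonneg, mul_one_div, div_self hp', Real.rpow_one]
    rw [h1, ← Real.mul_rpow hC.le hI]
    refine Real.rpow_le_rpow (by rw [hApow]; positivity) ?_ (by positivity)
    rw [hApow]; exact hX
  -- the left-hand side equals M z * A
  have hMz := hM z hz
  have hLHS : a * ‖g z‖ * w z ^ ((1:ℝ)/2) / (1 + deriv v (‖z‖)) =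
      (‖g z‖ *
        ((1 + deriv v (‖u‖)) / (1 + deriv v (‖z‖))) *
        (w z ^ ((1:ℝ)/2) / w u ^ ((1:ℝ)/2)) * τ u ^ (-(2:ℝ)/p)) * A := by
    have hn : -(2:ℝ)/p = -((2:ℝ)/p) := by ring
    rw [hn, Real.rpow_neg htu.le, hA_def]
    have h1 : (w u ^ ((1:ℝ)/2)) ≠ 0 := by positivity
    have h2 : (τ u ^ ((2:ℝ)/p)) ≠ 0 := by positivity
    field_simp
  have hMnonneg : 0 ≤ ‖g z‖ *
      ((1 + deriv v (‖u‖)) / (1 + deriv v (‖z‖))) *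
      (w z ^ ((1:ℝ)/2) / w u ^ ((1:ℝ)/2)) * τ u ^ (-(2:ℝ)/p) := by positivity
  calc a * ‖g z‖ * w z ^ ((1:ℝ)/2) / (1 + deriv v (‖z‖))
      = _ * A := hLHS
    _ ≤ B * (C ^ (1/p) * I ^ (1/p)) := mul_le_mul hMz hAle hAnonneg hB
    _ = C ^ (1/p) * B * I ^ (1/p) := by ring
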